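/- In a Heyting algebra, if for all γ₁, γ₂, δ we have ((γ₁ ⊓ γ₂) ⇨ δ) ≤ (γ₁ ⇨ δ) ⊔ (γ₂ ⇨ δ), then for all a, b we have (a ⇨ b) ⊔ (b ⇨ a) = ⊤. -/
import Mathlib

/-- In a Heyting algebra, the generalised De Morgan law
`((γ₁ ⊓ γ₂) ⇨ δ) ≤ (γ₁ ⇨ δ) ⊔ (γ₂ ⇨ δ)` implies prelinearity. -/
theorem inf_himp_le_prelinear {H : Type*} [HeytingAlgebra H]
    (h : ∀ γ₁ γ₂ δ : H, ((γ₁ ⊓ γ₂) ⇨ δ) ≤ (γ₁ ⇨ δ) ⊔ (γ₂ ⇨ δ)) (a b : H) :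
    (a ⇨ b) ⊔ (b ⇨ a) = ⊤ := by
  have := h a b (a ⊓ b)
  rw [himp_self] at this
  refine top_le_iff.mp (le_trans this (sup_le_sup ?_ ?_)) <;>
    exact himp_le_himp_left (by simp)
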